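/- Let R be a commutative ring, p a prime number, and n ≥ 1. If x ∈ 𝕎 R is a Witt vector all of whose coefficients lie in 𝔞_n(R), then all coefficients of frobenius(x) lie in 𝔞_{n−1}(R). Moreover p·W(𝔞_n(R)) ⊆ F(W(𝔞_n(R))): for every y ∈ 𝕎 R with all coefficients in 𝔞_n(R) there exists z ∈ 𝕎 R with all coefficients in 𝔞_n(R) such that frobenius(z) = p·y. -/

import Mathlib

/-- The subset `𝔞_n(R) = {x ∈ R : p^{n−i}·x^{p^i} = 0 for all 0 ≤ i ≤ n}`. -/
def wittAnnSet (R : Type*) [CommRing R] (p n : ℕ) : Set R :=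
  {x | ∀ i ≤ n, (p : R) ^ (n - i) * x ^ p ^ i = 0}

section Aux

variable {R : Type*} [CommRing R] {p n : ℕ}

lemma wittAnn_zero_mem (hp : p.Prime) : (0 : R) ∈ wittAnnSet R p n := by
  intro i _
  rw [zero_pow (pow_ne_zero i hp.pos.ne'), mul_zero]

lemma wittAnn_mul_mem (r : R) {x : R} (hx : x ∈ wittAnnSet R p n) :
    r * x ∈ wittAnnSet R p n := by
  intro i hi
  rw [mul_pow, show (p : R) ^ (n - i) * (r ^ p ^ i * x ^ p ^ i)
      = r ^ p ^ i * ((p : R) ^ (n - i) * x ^ p ^ i) from by ring, hx i hi, mul_zero]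

lemma wittAnn_add_mem (hp : p.Prime) {x y : R} (hx : x ∈ wittAnnSet R p n)
    (hy : y ∈ wittAnnSet R p n) : x + y ∈ wittAnnSet R p n := by
  intro i hi
  rw [add_pow, Finset.mul_sum]
  apply Finset.sum_eq_zero
  intro j hj
  rw [Finset.mem_range] at hj
  rcases Nat.eq_zero_or_pos j with rfl | hj0
  · simpa using hy i hi
  · set t := multiplicity p j with ht
    have hptj : p ^ t ∣ j := pow_multiplicity_dvd p j
    have hptle : p ^ t ≤ j := Nat.le_of_dvd hj0 hptj
    have hjle : j ≤ p ^ i := Nat.lt_succ_iff.mp hj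
    have hti : t ≤ i := (Nat.pow_le_pow_iff_right hp.one_lt).mp (hptle.trans hjle)
    have hdvd : p ^ (i - t) ∣ (p ^ i).choose j := by
      apply pow_dvd_of_le_emultiplicity
      rw [Nat.Prime.emultiplicity_choose_prime_pow hp hjle hj0.ne']
    obtain ⟨m, hm⟩ := hdvd
    have key2 : (p : R) ^ (n - i) * (p : R) ^ (i - t) * x ^ p ^ t = 0 := by
      rw [← pow_add, show n - i + (i - t) = n - t from by omega]
      exact hx t (hti.trans hi)
    have hx2 : x ^ j = x ^ p ^ t * x ^ (j - p ^ t) := by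
      rw [← pow_add]; congr 1; omega
    rw [hm, hx2]
    push_cast
    linear_combination (x ^ (j - p ^ t) * y ^ (p ^ i - j) * (m : R)) * key2

/-- `wittAnnSet` as an ideal. -/
def wittAnnIdeal (p : ℕ) [Fact p.Prime] (R : Type*) [CommRing R] (n : ℕ) : Ideal R where
  carrier := wittAnnSet R p n
  zero_mem' := wittAnn_zero_mem Fact.out
  add_mem' := wittAnn_add_mem Fact.out
  smul_mem' := fun r x hx => by simpa [smul_eq_mul] using wittAnn_mul_mem r hx

lemma wittAnn_pow_mem (hn : 1 ≤ n) {x : R} (hx : x ∈ wittAnnSet R p n) :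
    x ^ p ∈ wittAnnSet R p (n - 1) := by
  intro i hi
  have e : (x ^ p) ^ p ^ i = x ^ p ^ (i + 1) := by
    rw [← pow_mul]; congr 1; ring
  rw [e, show n - 1 - i = n - (i + 1) from by omega]
  exact hx (i + 1) (by omega)

lemma wittAnn_pmul_mem (hp : p.Prime) (hn : 1 ≤ n) {x : R} (hx : x ∈ wittAnnSet R p n) :
    (p : R) * x ∈ wittAnnSet R p (n - 1) := by
  intro i hi
  have hip : i < p ^ i := Nat.lt_pow_self hp.one_lt
  rw [mul_pow, ← mul_assoc, ← pow_add,
    show n - 1 - i + p ^ i = (n - 1 - i + p ^ i - (n - i)) + (n - i) from by omega,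
    pow_add, mul_assoc, hx i (by omega), mul_zero]

lemma aeval_sub_constantCoeff_mem (v : ℕ → R) (P : MvPolynomial ℕ ℤ) :
    MvPolynomial.aeval v P - algebraMap ℤ R (MvPolynomial.constantCoeff P)
      ∈ Ideal.span (Set.range v) := by
  induction P using MvPolynomial.induction_on with
  | C a => simp
  | add P Q hP hQ =>
    have h := Ideal.add_mem _ hP hQ
    rw [map_add, map_add, map_add]
    convert h using 1
    ring
  | mul_X P i hP =>
    rw [map_mul, MvPolynomial.aeval_X, map_mul, MvPolynomial.constantCoeff_X, mul_zero,
      map_zero, sub_zero]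
    exact Ideal.mul_mem_left _ _ (Ideal.subset_span ⟨i, rfl⟩)

end Aux

lemma constCoeff_frobeniusPolyAux (p : ℕ) [Fact p.Prime] (k : ℕ) :
    MvPolynomial.constantCoeff (WittVector.frobeniusPolyAux p k) = 0 := by
  have hp : p.Prime := Fact.out
  have h : MvPolynomial.constantCoeff (WittVector.frobeniusPoly p k) = 0 := by
    have hc : (WittVector.coeff (0 : WittVector p ℤ)) = (0 : ℕ → ℤ) := by
      funext i; simp [WittVector.zero_coeff]
    have h2 : MvPolynomial.aeval (0 : ℕ → ℤ) (WittVector.frobeniusPoly p k)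
        = (WittVector.frobenius (0 : WittVector p ℤ)).coeff k := by
      rw [WittVector.coeff_frobenius, hc]
    rw [map_zero, WittVector.zero_coeff, MvPolynomial.aeval_zero] at h2
    simpa using h2
  rw [WittVector.frobeniusPoly, map_add, map_mul, map_pow, MvPolynomial.constantCoeff_X,
    MvPolynomial.constantCoeff_C, zero_pow hp.pos.ne', zero_add] at h
  have hpz : (p : ℤ) ≠ 0 := by exact_mod_cast hp.pos.ne'
  exact (mul_eq_zero.mp h).resolve_left hpz

/-- For `n ≥ 1`: the Frobenius of the ring of `p`-typical Witt vectors maps Witt vectors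
with all coefficients in `𝔞_n(R)` to Witt vectors with all coefficients in `𝔞_{n−1}(R)`;
moreover `p·W(𝔞_n(R)) ⊆ F(W(𝔞_n(R)))`. -/
theorem stmt9 (p : ℕ) [Fact p.Prime] (R : Type*) [CommRing R] (n : ℕ) (hn : 1 ≤ n) :
    (∀ x : WittVector p R, (∀ k, x.coeff k ∈ wittAnnSet R p n) →
      ∀ k, (WittVector.frobenius x).coeff k ∈ wittAnnSet R p (n - 1)) ∧
    (∀ y : WittVector p R, (∀ k, y.coeff k ∈ wittAnnSet R p n) →
      ∃ z : WittVector p R, (∀ k, z.coeff k ∈ wittAnnSet R p n) ∧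
        WittVector.frobenius z = (p : WittVector p R) * y) := by
  have hp : p.Prime := Fact.out
  constructor
  · intro x hx k
    rw [WittVector.coeff_frobenius]
    have hA : MvPolynomial.aeval x.coeff (WittVector.frobeniusPolyAux p k)
        ∈ wittAnnSet R p n := by
      have h1 := aeval_sub_constantCoeff_mem x.coeff (WittVector.frobeniusPolyAux p k)
      rw [constCoeff_frobeniusPolyAux, map_zero, sub_zero] at h1
      have h2 : Ideal.span (Set.range x.coeff) ≤ wittAnnIdeal p R n := by
        rw [Ideal.span_le]
        rintro _ ⟨i, rfl⟩
        exact hx i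
      exact h2 h1
    rw [WittVector.frobeniusPoly, map_add, map_mul, map_pow, MvPolynomial.aeval_X,
      MvPolynomial.aeval_C, eq_intCast, Int.cast_natCast]
    exact wittAnn_add_mem hp (wittAnn_pow_mem hn (hx k)) (wittAnn_pmul_mem hp hn hA)
  · intro y hy
    refine ⟨WittVector.verschiebung y, ?_, ?_⟩
    · intro k
      cases k with
      | zero => rw [WittVector.verschiebung_coeff_zero]; exact wittAnn_zero_mem hp
      | succ k => rw [WittVector.verschiebung_coeff_succ]; exact hy k
    · rw [WittVector.frobenius_verschiebung, mul_comm]
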